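/- Let 0 < α ≤ 1, let w, v be non-negative measurable functions on (0,∞), and let ψ be a non-negative measurable function on (0,∞)×(0,∞). Then the inequality ∫₀^∞ (∫₀^∞ ψ(t,u) h(u) du)^α w(t) dt ≲ ∫₀^∞ h(t)^α v(t) dt holds for all non-negative non-decreasing functions h on (0,∞) if and only if ∫₀^∞ (∫_x^∞ ψ(t,u) du)^α w(t) dt ≲ ∫_x^∞ v(t) dt holds for all x > 0, with the same implicit constants up to a factor depending only on α. -/

import Mathlib

open MeasureTheory Set ENNReal

private lemma rpow_iSup' {α : ℝ} (hα : 0 < α) {ι : Sort*} (f : ι → ℝ≥0∞) :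
    (⨆ i, f i) ^ α = ⨆ i, f i ^ α :=
  map_iSup (ENNReal.orderIsoRpow α hα) f

private lemma rpow_tsum_le {α : ℝ} (hα0 : 0 < α) (hα1 : α ≤ 1) (a : ℤ → ℝ≥0∞) :
    (∑' j, a j) ^ α ≤ ∑' j, (a j) ^ α := by
  rw [ENNReal.tsum_eq_iSup_sum, rpow_iSup' hα0]
  refine iSup_le fun s => ?_
  calc (∑ i ∈ s, a i) ^ α ≤ ∑ i ∈ s, (a i) ^ α := by
        induction s using Finset.cons_induction with
        | empty => simp [ENNReal.zero_rpow_of_pos hα0]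
        | cons i s hi ih =>
          rw [Finset.sum_cons, Finset.sum_cons]
          exact le_trans (ENNReal.rpow_add_le_add_rpow _ _ hα0.le hα1)
            (add_le_add_right ih _)
    _ ≤ ∑' j, (a j) ^ α := ENNReal.sum_le_tsum s

private lemma two_rpow_ne_top (p : ℝ) : (2:ℝ≥0∞) ^ p ≠ ⊤ := by
  rw [Ne, ENNReal.rpow_eq_top_iff]
  push_neg
  refine ⟨fun h => absurd h (by norm_num), fun h => absurd h (by norm_num)⟩

private lemma geom_sum_aux {β : ℝ} (k : ℤ) :
    ∑' n : ℕ, (2:ℝ≥0∞) ^ (((k - n : ℤ) : ℝ) * β) =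
      (2:ℝ≥0∞) ^ ((k:ℝ) * β) * (1 - (2:ℝ≥0∞) ^ (-β))⁻¹ := by
  have h2 : (2:ℝ≥0∞) ≠ 0 := by norm_num
  have h2' : (2:ℝ≥0∞) ≠ ⊤ := by norm_num
  have key : ∀ n : ℕ, (2:ℝ≥0∞) ^ (((k - n : ℤ) : ℝ) * β) =
      (2:ℝ≥0∞) ^ ((k:ℝ) * β) * ((2:ℝ≥0∞) ^ (-β)) ^ n := by
    intro n
    rw [← ENNReal.rpow_natCast ((2:ℝ≥0∞) ^ (-β)) n, ← ENNReal.rpow_mul,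
      ← ENNReal.rpow_add _ _ h2 h2']
    congr 1
    push_cast
    ring
  simp_rw [key]
  rw [ENNReal.tsum_mul_left, ENNReal.tsum_geometric]

private lemma exists_k {c : ℝ≥0∞} (hc0 : c ≠ 0) (hct : c ≠ ⊤) :
    ∃ k : ℤ, (2:ℝ≥0∞) ^ ((k:ℤ):ℝ) < c ∧ c ≤ (2:ℝ≥0∞) ^ (((k:ℤ):ℝ) + 1) := by
  have hpos : 0 < c.toReal := ENNReal.toReal_pos hc0 hct
  set L := Real.logb 2 c.toReal with hL
  refine ⟨⌈L⌉ - 1, ?_, ?_⟩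
  · have h1 : ((⌈L⌉ - 1 : ℤ):ℝ) < L := by
      push_cast
      have := Int.ceil_lt_add_one L
      linarith
    have h2 : (2:ℝ) ^ (((⌈L⌉ - 1 : ℤ)):ℝ) < (2:ℝ) ^ L :=
      Real.rpow_lt_rpow_of_exponent_lt one_lt_two h1
    rw [Real.rpow_logb two_pos (by norm_num) hpos] at h2
    calc (2:ℝ≥0∞) ^ (((⌈L⌉ - 1 : ℤ)):ℝ) = ENNReal.ofReal ((2:ℝ) ^ (((⌈L⌉ - 1 : ℤ)):ℝ)) := by
          rw [← ENNReal.ofReal_rpow_of_pos two_pos]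
          norm_num
      _ < ENNReal.ofReal c.toReal := (ENNReal.ofReal_lt_ofReal_iff hpos).mpr h2
      _ = c := ENNReal.ofReal_toReal hct
  · have h1 : L ≤ ((⌈L⌉ - 1 : ℤ):ℝ) + 1 := by
      push_cast
      have := Int.le_ceil L
      linarith
    have h2 : c.toReal ≤ (2:ℝ) ^ (((⌈L⌉ - 1 : ℤ):ℝ) + 1) := by
      calc c.toReal = (2:ℝ) ^ L := (Real.rpow_logb two_pos (by norm_num) hpos).symm
        _ ≤ _ := Real.rpow_le_rpow_of_exponent_le one_le_two h1
    calc c = ENNReal.ofReal c.toReal := (ENNReal.ofReal_toReal hct).symm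
      _ ≤ ENNReal.ofReal ((2:ℝ) ^ (((⌈L⌉ - 1 : ℤ):ℝ) + 1)) := ENNReal.ofReal_le_ofReal h2
      _ = (2:ℝ≥0∞) ^ (((⌈L⌉ - 1 : ℤ):ℝ) + 1) := by
          rw [← ENNReal.ofReal_rpow_of_pos two_pos]
          norm_num

private lemma support_subset_aux {c : ℝ≥0∞} {k : ℤ} (hk2 : c ≤ (2:ℝ≥0∞) ^ (((k:ℤ):ℝ) + 1))
    (g : ℤ → ℝ≥0∞) :
    (Function.support fun j : ℤ => if (2:ℝ≥0∞) ^ ((j:ℤ):ℝ) < c then g j else 0) ⊆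
      Set.range (fun n : ℕ => k - n) := by
  intro j hj
  rcases le_or_gt j k with hle | hlt
  · exact ⟨(k - j).toNat, show k - ((k - j).toNat : ℤ) = j by omega⟩
  · exfalso
    apply hj
    show (if (2:ℝ≥0∞) ^ ((j:ℤ):ℝ) < c then g j else 0) = 0
    rw [if_neg]
    refine not_lt.mpr (le_trans hk2 (ENNReal.rpow_le_rpow_of_exponent_le one_le_two ?_))
    exact_mod_cast hlt

private lemma inj_aux (k : ℤ) : Function.Injective (fun n : ℕ => k - (n:ℤ)) := by
  intro a b h
  simp only at h
  omega

private lemma cond_true_aux {c : ℝ≥0∞} {k : ℤ} (hk1 : (2:ℝ≥0∞) ^ ((k:ℤ):ℝ) < c) (n : ℕ) :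
    (2:ℝ≥0∞) ^ (((k - n : ℤ):ℤ):ℝ) < c := by
  refine lt_of_le_of_lt (ENNReal.rpow_le_rpow_of_exponent_le one_le_two ?_) hk1
  push_cast
  linarith [Nat.cast_nonneg (α := ℝ) n]

private lemma levels_ge (c : ℝ≥0∞) :
    c ≤ ∑' j : ℤ, (if (2:ℝ≥0∞) ^ ((j:ℤ):ℝ) < c then (2:ℝ≥0∞) ^ ((j:ℤ):ℝ) else 0) := by
  rcases eq_or_ne c 0 with rfl | hc0
  · exact zero_le
  rcases eq_or_ne c ⊤ with rfl | hct
  · calc (⊤:ℝ≥0∞) = ∑' _ : ℕ, (1:ℝ≥0∞) := (tsum_const_eq_top_of_ne_zero one_ne_zero).symm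
      _ ≤ ∑' n : ℕ, (if (2:ℝ≥0∞) ^ (((n:ℤ):ℤ):ℝ) < ⊤ then (2:ℝ≥0∞) ^ (((n:ℤ):ℤ):ℝ) else 0) := by
          refine ENNReal.tsum_le_tsum fun n => ?_
          rw [if_pos (lt_top_iff_ne_top.mpr (two_rpow_ne_top _))]
          have h1 : (1:ℝ≥0∞) = (2:ℝ≥0∞) ^ (0:ℝ) := by simp
          rw [h1]
          exact ENNReal.rpow_le_rpow_of_exponent_le one_le_two (by positivity)
      _ ≤ ∑' j : ℤ, (if (2:ℝ≥0∞) ^ ((j:ℤ):ℝ) < ⊤ then (2:ℝ≥0∞) ^ ((j:ℤ):ℝ) else 0) :=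
          ENNReal.tsum_comp_le_tsum_of_injective (fun a b h => by exact_mod_cast h) _
  obtain ⟨k, hk1, hk2⟩ := exists_k hc0 hct
  have hsum : ∑' j : ℤ, (if (2:ℝ≥0∞) ^ ((j:ℤ):ℝ) < c then (2:ℝ≥0∞) ^ ((j:ℤ):ℝ) else 0)
      = ∑' n : ℕ, (2:ℝ≥0∞) ^ (((k - n : ℤ):ℤ):ℝ) := by
    rw [← (inj_aux k).tsum_eq (support_subset_aux hk2 _)]
    exact tsum_congr fun n => if_pos (cond_true_aux hk1 n)
  have hgeom := geom_sum_aux (β := 1) k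
  simp only [mul_one] at hgeom
  rw [hsum, hgeom, ENNReal.rpow_neg_one, ENNReal.one_sub_inv_two, inv_inv]
  calc c ≤ 2 ^ ((k:ℝ) + 1) := hk2
    _ = 2 ^ (k:ℝ) * 2 := by
        rw [ENNReal.rpow_add _ _ (by norm_num) (by norm_num), ENNReal.rpow_one]

private lemma levels_le {α : ℝ} (hα : 0 < α) (c : ℝ≥0∞) :
    ∑' j : ℤ, (if (2:ℝ≥0∞) ^ ((j:ℤ):ℝ) < c then (2:ℝ≥0∞) ^ (((j:ℤ):ℝ) * α) else 0)
      ≤ (1 - (2:ℝ≥0∞) ^ (-α))⁻¹ * c ^ α := by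
  rcases eq_or_ne c 0 with rfl | hc0
  · simp
  rcases eq_or_ne c ⊤ with rfl | hct
  · rw [ENNReal.top_rpow_of_pos hα, ENNReal.mul_top]
    · exact le_top
    · rw [Ne, ENNReal.inv_eq_zero]
      exact (lt_of_le_of_lt tsub_le_self (lt_top_iff_ne_top.mpr ENNReal.one_ne_top)).ne
  obtain ⟨k, hk1, hk2⟩ := exists_k hc0 hct
  calc ∑' j : ℤ, (if (2:ℝ≥0∞) ^ ((j:ℤ):ℝ) < c then (2:ℝ≥0∞) ^ (((j:ℤ):ℝ) * α) else 0)
      = ∑' n : ℕ, (if (2:ℝ≥0∞) ^ (((k - n : ℤ):ℤ):ℝ) < c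
          then (2:ℝ≥0∞) ^ ((((k - n : ℤ):ℤ):ℝ) * α) else 0) :=
        ((inj_aux k).tsum_eq (support_subset_aux hk2 _)).symm
    _ ≤ ∑' n : ℕ, (2:ℝ≥0∞) ^ ((((k - n : ℤ):ℤ):ℝ) * α) :=
        ENNReal.tsum_le_tsum fun n => by split <;> simp
    _ = (2:ℝ≥0∞) ^ ((k:ℝ) * α) * (1 - (2:ℝ≥0∞) ^ (-α))⁻¹ := geom_sum_aux k
    _ ≤ c ^ α * (1 - (2:ℝ≥0∞) ^ (-α))⁻¹ := by
        refine _root_.mul_le_mul_left ?_ _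
        rw [ENNReal.rpow_mul]
        exact ENNReal.rpow_le_rpow hk1.le hα.le
    _ = (1 - (2:ℝ≥0∞) ^ (-α))⁻¹ * c ^ α := mul_comm _ _

/-- Theorem 3.3(b) of Heinig–Maligranda: for `0 < α ≤ 1`, kernels `ψ ≥ 0` and weights
`w, v ≥ 0`, the inequality `∫₀^∞ (∫₀^∞ ψ(t,u) h(u) du)^α w(t) dt ≲ ∫₀^∞ h^α v`
holds for all non-negative non-decreasing `h` iff
`∫₀^∞ (∫_x^∞ ψ(t,u) du)^α w(t) dt ≲ ∫_x^∞ v` holds for all `x > 0`. -/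
theorem heinig_maligranda (α : ℝ) (hα0 : 0 < α) (hα1 : α ≤ 1)
    (w v : ℝ → ℝ≥0∞) (ψ : ℝ → ℝ → ℝ≥0∞)
    (hw : Measurable w) (hv : Measurable v) (hψ : Measurable (Function.uncurry ψ)) :
    (∃ C : ℝ≥0∞, C ≠ ⊤ ∧ ∀ h : ℝ → ℝ≥0∞, Measurable h →
        (∀ ⦃s t : ℝ⦄, 0 < s → s ≤ t → h s ≤ h t) →
        ∫⁻ t in Set.Ioi (0:ℝ), (∫⁻ u in Set.Ioi (0:ℝ), ψ t u * h u) ^ α * w t ≤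
          C * ∫⁻ t in Set.Ioi (0:ℝ), h t ^ α * v t) ↔
    (∃ C : ℝ≥0∞, C ≠ ⊤ ∧ ∀ x : ℝ, 0 < x →
        ∫⁻ t in Set.Ioi (0:ℝ), (∫⁻ u in Set.Ioi x, ψ t u) ^ α * w t ≤
          C * ∫⁻ t in Set.Ioi x, v t) := by
  have hψt : ∀ t, Measurable (ψ t) := fun t => hψ.comp measurable_prodMk_left
  have hIm : ∀ s : Set ℝ, Measurable fun t => ∫⁻ u in s, ψ t u := fun s =>
    Measurable.lintegral_prod_right' (ν := volume.restrict s) hψ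
  constructor
  · rintro ⟨C, hC, H⟩
    refine ⟨C, hC, fun x hx => ?_⟩
    have hmono : ∀ ⦃s t : ℝ⦄, 0 < s → s ≤ t →
        (Ioi x).indicator (fun _ => (1:ℝ≥0∞)) s ≤ (Ioi x).indicator (fun _ => (1:ℝ≥0∞)) t := by
      intro s t hs hst
      by_cases hsx : s ∈ Ioi x
      · rw [Set.indicator_of_mem hsx,
          Set.indicator_of_mem (show t ∈ Ioi x from lt_of_lt_of_le hsx hst)]
      · rw [Set.indicator_of_notMem hsx]
        exact zero_le
    have key := H ((Ioi x).indicator fun _ => (1:ℝ≥0∞))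
      (measurable_const.indicator measurableSet_Ioi) hmono
    have hIoi : Ioi x ∩ Ioi (0:ℝ) = Ioi x := by
      rw [Set.inter_eq_left]
      exact Ioi_subset_Ioi hx.le
    have hL : ∀ t, ∫⁻ u in Ioi (0:ℝ), ψ t u * (Ioi x).indicator (fun _ => (1:ℝ≥0∞)) u
        = ∫⁻ u in Ioi x, ψ t u := by
      intro t
      have hpt : ∀ u, ψ t u * (Ioi x).indicator (fun _ => (1:ℝ≥0∞)) u
          = (Ioi x).indicator (fun u => ψ t u) u := by
        intro u
        by_cases hu : u ∈ Ioi x <;> simp [hu]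
      simp_rw [hpt]
      rw [lintegral_indicator measurableSet_Ioi,
        Measure.restrict_restrict measurableSet_Ioi, hIoi]
    have hR : ∀ t, (Ioi x).indicator (fun _ => (1:ℝ≥0∞)) t ^ α * v t
        = (Ioi x).indicator (fun t => v t) t := by
      intro t
      by_cases ht : t ∈ Ioi x <;>
        simp [ht, ENNReal.one_rpow, ENNReal.zero_rpow_of_pos hα0]
    simp_rw [hL, hR] at key
    rwa [lintegral_indicator measurableSet_Ioi,
      Measure.restrict_restrict measurableSet_Ioi, hIoi] at key
  · rintro ⟨C, hC, H⟩
    set K := (1 - (2:ℝ≥0∞) ^ (-α))⁻¹ with hKdef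
    have hr1 : (2:ℝ≥0∞) ^ (-α) < 1 :=
      ENNReal.rpow_lt_one_of_one_lt_of_neg one_lt_two (neg_lt_zero.mpr hα0)
    have hKtop : K ≠ ⊤ := by
      rw [hKdef, Ne, ENNReal.inv_eq_top]
      exact (tsub_pos_of_lt hr1).ne'
    -- extended Hardy condition, valid also at x = 0
    have hH0 : ∀ x : ℝ, 0 ≤ x →
        ∫⁻ t in Ioi (0:ℝ), (∫⁻ u in Ioi x, ψ t u) ^ α * w t ≤ C * ∫⁻ u in Ioi x, v u := by
      intro x hx
      rcases hx.lt_or_eq with hx' | hx'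
      · exact H x hx'
      subst hx'  -- might fail direction
      have hsets : ∀ m n : ℕ, m ≤ n → Ioi ((1:ℝ)/(m+1)) ⊆ Ioi ((1:ℝ)/(n+1)) := by
        intro m n hmn
        refine Ioi_subset_Ioi ?_
        apply one_div_le_one_div_of_le
        · positivity
        · have : (m:ℝ) ≤ n := Nat.cast_le.mpr hmn
          linarith
      have hpt : ∀ t, ∫⁻ u in Ioi (0:ℝ), ψ t u
          = ⨆ n : ℕ, ∫⁻ u in Ioi ((1:ℝ)/(n+1)), ψ t u := by
        intro t
        have hmonoInd : Monotone fun n : ℕ => (Ioi ((1:ℝ)/(n+1))).indicator (ψ t) := by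
          intro m n hmn
          exact Set.indicator_le_indicator_of_subset (hsets m n hmn) (fun u => zero_le)
        have hsup : (fun u => ⨆ n : ℕ, (Ioi ((1:ℝ)/(n+1))).indicator (ψ t) u)
            = (Ioi (0:ℝ)).indicator (ψ t) := by
          funext u
          rcases le_or_gt u 0 with hu | hu
          · have h1 : ∀ n : ℕ, (Ioi ((1:ℝ)/(n+1))).indicator (ψ t) u = 0 := by
              intro n
              apply Set.indicator_of_notMem
              simp only [mem_Ioi, not_lt]
              have : (0:ℝ) ≤ 1/(n+1) := by positivity
              linarith
            rw [Set.indicator_of_notMem (by simpa using hu)]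
            simp only [h1, iSup_const]
          · obtain ⟨n, hn⟩ := exists_nat_one_div_lt hu
            rw [Set.indicator_of_mem (show u ∈ Ioi (0:ℝ) from hu)]
            apply le_antisymm
            · exact iSup_le fun m => Set.indicator_le_self _ _ u
            · exact le_iSup_of_le n (le_of_eq
                (Set.indicator_of_mem (show u ∈ Ioi ((1:ℝ)/(n+1)) from hn) (ψ t)).symm)
        calc ∫⁻ u in Ioi (0:ℝ), ψ t u
            = ∫⁻ u, (Ioi (0:ℝ)).indicator (ψ t) u := (lintegral_indicator measurableSet_Ioi _).symm
          _ = ∫⁻ u, ⨆ n : ℕ, (Ioi ((1:ℝ)/(n+1))).indicator (ψ t) u := by rw [hsup]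
          _ = ⨆ n : ℕ, ∫⁻ u, (Ioi ((1:ℝ)/(n+1))).indicator (ψ t) u :=
              lintegral_iSup (fun n => (hψt t).indicator measurableSet_Ioi) hmonoInd
          _ = ⨆ n : ℕ, ∫⁻ u in Ioi ((1:ℝ)/(n+1)), ψ t u := by
              simp_rw [lintegral_indicator measurableSet_Ioi]
      calc ∫⁻ t in Ioi (0:ℝ), (∫⁻ u in Ioi (0:ℝ), ψ t u) ^ α * w t
          = ∫⁻ t in Ioi (0:ℝ), ⨆ n : ℕ, (∫⁻ u in Ioi ((1:ℝ)/(n+1)), ψ t u) ^ α * w t := by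
            refine lintegral_congr fun t => ?_
            rw [hpt t, rpow_iSup' hα0, ENNReal.iSup_mul]
        _ = ⨆ n : ℕ, ∫⁻ t in Ioi (0:ℝ), (∫⁻ u in Ioi ((1:ℝ)/(n+1)), ψ t u) ^ α * w t := by
            refine lintegral_iSup (fun n => ((hIm _).pow_const _).mul hw) ?_
            intro m n hmn t
            exact _root_.mul_le_mul_left
              (ENNReal.rpow_le_rpow (lintegral_mono_set (hsets m n hmn)) hα0.le) _
        _ ≤ ⨆ n : ℕ, C * ∫⁻ u in Ioi ((1:ℝ)/(n+1)), v u :=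
            iSup_mono fun n => H _ (by positivity)
        _ ≤ C * ∫⁻ u in Ioi (0:ℝ), v u := by
            refine iSup_le fun n => _root_.mul_le_mul_right (lintegral_mono_set ?_) C
            exact Ioi_subset_Ioi (by positivity)
    refine ⟨C * K, ENNReal.mul_ne_top hC hKtop, ?_⟩
    intro h hmeas hmono
    set S : ℤ → Set ℝ := fun j => {u : ℝ | 0 < u ∧ (2:ℝ≥0∞) ^ ((j:ℤ):ℝ) < h u} with hSdef
    have hSm : ∀ j, MeasurableSet (S j) :=
      fun j => measurableSet_Ioi.inter (hmeas measurableSet_Ioi)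
    have hSsub : ∀ j, S j ⊆ Ioi (0:ℝ) := fun j u hu => hu.1
    -- evaluating set-indicator integrals
    have hind : ∀ (c : ℝ≥0∞) (j : ℤ) (f : ℝ → ℝ≥0∞), Measurable f →
        ∫⁻ u in Ioi (0:ℝ), (S j).indicator (fun _ => c) u * f u = c * ∫⁻ u in S j, f u := by
      intro c j f hf
      have hpt : ∀ u, (S j).indicator (fun _ => c) u * f u
          = (S j).indicator (fun u => c * f u) u := by
        intro u
        by_cases hu : u ∈ S j <;> simp [hu]
      simp_rw [hpt]
      rw [lintegral_indicator (hSm j), Measure.restrict_restrict (hSm j),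
        Set.inter_eq_left.mpr (hSsub j), lintegral_const_mul c hf]
    -- the per-level Hardy bound
    have hJ : ∀ j : ℤ, ∫⁻ t in Ioi (0:ℝ), (∫⁻ u in S j, ψ t u) ^ α * w t
        ≤ C * ∫⁻ u in S j, v u := by
      intro j
      rcases Set.eq_empty_or_nonempty (S j) with hj | hj
      · simp [hj, ENNReal.zero_rpow_of_pos hα0]
      · have hbdd : BddBelow (S j) := ⟨0, fun u hu => hu.1.le⟩
        have hx0 : 0 ≤ sInf (S j) := le_csInf hj fun u hu => hu.1.le
        have hsub1 : Ioi (sInf (S j)) ⊆ S j := by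
          intro u hu
          obtain ⟨s, hs, hsu⟩ := (csInf_lt_iff hbdd hj).mp hu
          exact ⟨lt_trans hs.1 hsu, lt_of_lt_of_le hs.2 (hmono hs.1 hsu.le)⟩
        have hae : S j =ᵐ[volume] Ioi (sInf (S j)) := by
          rw [MeasureTheory.ae_eq_set]
          constructor
          · refine measure_mono_null (fun u hu => ?_) (Real.volume_singleton (a := sInf (S j)))
            have h1 : sInf (S j) ≤ u := csInf_le hbdd hu.1
            have h2 : ¬ sInf (S j) < u := hu.2
            simp only [mem_singleton_iff]
            linarith [not_lt.mp h2]
          · rw [Set.diff_eq_empty.mpr hsub1]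
            exact measure_empty
        have h1 : ∀ t, ∫⁻ u in S j, ψ t u = ∫⁻ u in Ioi (sInf (S j)), ψ t u :=
          fun t => setLIntegral_congr hae
        have h2 : ∫⁻ u in S j, v u = ∫⁻ u in Ioi (sInf (S j)), v u := setLIntegral_congr hae
        simp_rw [h1, h2]
        exact hH0 _ hx0
    -- pointwise comparison of the inner integral with the level sums
    have step1t : ∀ t, ∫⁻ u in Ioi (0:ℝ), ψ t u * h u
        ≤ ∑' j : ℤ, (2:ℝ≥0∞) ^ ((j:ℤ):ℝ) * ∫⁻ u in S j, ψ t u := by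
      intro t
      calc ∫⁻ u in Ioi (0:ℝ), ψ t u * h u
          ≤ ∫⁻ u in Ioi (0:ℝ),
              ∑' j : ℤ, (S j).indicator (fun _ => (2:ℝ≥0∞) ^ ((j:ℤ):ℝ)) u * ψ t u := by
            refine setLIntegral_mono' measurableSet_Ioi fun u hu => ?_
            rw [ENNReal.tsum_mul_right, mul_comm (ψ t u) (h u)]
            refine _root_.mul_le_mul_left ?_ _
            refine le_trans (levels_ge (h u)) (le_of_eq (tsum_congr fun j => ?_))
            rw [Set.indicator_apply]
            have hiff : u ∈ S j ↔ (2:ℝ≥0∞) ^ ((j:ℤ):ℝ) < h u := by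
              simp [hSdef, mem_setOf_eq, (mem_Ioi.mp hu)]
            rw [if_congr hiff.symm rfl rfl]
        _ = ∑' j : ℤ, ∫⁻ u in Ioi (0:ℝ),
              (S j).indicator (fun _ => (2:ℝ≥0∞) ^ ((j:ℤ):ℝ)) u * ψ t u :=
            lintegral_tsum fun j =>
              ((measurable_const.indicator (hSm j)).mul (hψt t)).aemeasurable
        _ = ∑' j : ℤ, (2:ℝ≥0∞) ^ ((j:ℤ):ℝ) * ∫⁻ u in S j, ψ t u :=
            tsum_congr fun j => hind _ j _ (hψt t)
    have step1 : ∀ t, (∫⁻ u in Ioi (0:ℝ), ψ t u * h u) ^ α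
        ≤ ∑' j : ℤ, (2:ℝ≥0∞) ^ (((j:ℤ):ℝ) * α) * (∫⁻ u in S j, ψ t u) ^ α := by
      intro t
      calc (∫⁻ u in Ioi (0:ℝ), ψ t u * h u) ^ α
          ≤ (∑' j : ℤ, (2:ℝ≥0∞) ^ ((j:ℤ):ℝ) * ∫⁻ u in S j, ψ t u) ^ α :=
            ENNReal.rpow_le_rpow (step1t t) hα0.le
        _ ≤ ∑' j : ℤ, ((2:ℝ≥0∞) ^ ((j:ℤ):ℝ) * ∫⁻ u in S j, ψ t u) ^ α :=
            rpow_tsum_le hα0 hα1 _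
        _ = ∑' j : ℤ, (2:ℝ≥0∞) ^ (((j:ℤ):ℝ) * α) * (∫⁻ u in S j, ψ t u) ^ α := by
            refine tsum_congr fun j => ?_
            rw [ENNReal.mul_rpow_of_nonneg _ _ hα0.le, ← ENNReal.rpow_mul]
    -- the main chain
    calc ∫⁻ t in Ioi (0:ℝ), (∫⁻ u in Ioi (0:ℝ), ψ t u * h u) ^ α * w t
        ≤ ∫⁻ t in Ioi (0:ℝ),
            (∑' j : ℤ, (2:ℝ≥0∞) ^ (((j:ℤ):ℝ) * α) * (∫⁻ u in S j, ψ t u) ^ α) * w t :=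
          lintegral_mono fun t => _root_.mul_le_mul_left (step1 t) _
      _ = ∑' j : ℤ, (2:ℝ≥0∞) ^ (((j:ℤ):ℝ) * α)
            * ∫⁻ t in Ioi (0:ℝ), (∫⁻ u in S j, ψ t u) ^ α * w t := by
          have hrw : ∀ t, (∑' j : ℤ, (2:ℝ≥0∞) ^ (((j:ℤ):ℝ) * α) * (∫⁻ u in S j, ψ t u) ^ α) * w t
              = ∑' j : ℤ, (2:ℝ≥0∞) ^ (((j:ℤ):ℝ) * α) * ((∫⁻ u in S j, ψ t u) ^ α * w t) := by
            intro t
            rw [← ENNReal.tsum_mul_right]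
            exact tsum_congr fun j => mul_assoc _ _ _
          simp_rw [hrw]
          rw [lintegral_tsum fun j => (Measurable.aemeasurable
            (f := fun t => (2:ℝ≥0∞) ^ (((j:ℤ):ℝ) * α) * ((∫⁻ u in S j, ψ t u) ^ α * w t))
            (measurable_const.mul (((hIm (S j)).pow_const α).mul hw)))]
          exact tsum_congr fun j =>
            lintegral_const_mul _ (((hIm (S j)).pow_const α).mul hw)
      _ ≤ ∑' j : ℤ, (2:ℝ≥0∞) ^ (((j:ℤ):ℝ) * α) * (C * ∫⁻ u in S j, v u) :=
          ENNReal.tsum_le_tsum fun j => _root_.mul_le_mul_right (hJ j) _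
      _ = C * ∑' j : ℤ, (2:ℝ≥0∞) ^ (((j:ℤ):ℝ) * α) * ∫⁻ u in S j, v u := by
          rw [← ENNReal.tsum_mul_left]
          exact tsum_congr fun j => mul_left_comm _ C _
      _ = C * ∫⁻ u in Ioi (0:ℝ),
            (∑' j : ℤ, (S j).indicator (fun _ => (2:ℝ≥0∞) ^ (((j:ℤ):ℝ) * α)) u) * v u := by
          congr 1
          calc ∑' j : ℤ, (2:ℝ≥0∞) ^ (((j:ℤ):ℝ) * α) * ∫⁻ u in S j, v u
              = ∑' j : ℤ, ∫⁻ u in Ioi (0:ℝ),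
                  (S j).indicator (fun _ => (2:ℝ≥0∞) ^ (((j:ℤ):ℝ) * α)) u * v u :=
                tsum_congr fun j => (hind _ j v hv).symm
            _ = ∫⁻ u in Ioi (0:ℝ), ∑' j : ℤ,
                  (S j).indicator (fun _ => (2:ℝ≥0∞) ^ (((j:ℤ):ℝ) * α)) u * v u :=
                (lintegral_tsum fun j =>
                  ((measurable_const.indicator (hSm j)).mul hv).aemeasurable).symm
            _ = ∫⁻ u in Ioi (0:ℝ),
                  (∑' j : ℤ, (S j).indicator (fun _ => (2:ℝ≥0∞) ^ (((j:ℤ):ℝ) * α)) u) * v u :=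
                lintegral_congr fun u => ENNReal.tsum_mul_right
      _ ≤ C * ∫⁻ u in Ioi (0:ℝ), (K * h u ^ α) * v u := by
          refine _root_.mul_le_mul_right (setLIntegral_mono' measurableSet_Ioi fun u hu => ?_) C
          refine _root_.mul_le_mul_left ?_ _
          refine le_trans (le_of_eq (tsum_congr fun j => ?_)) (levels_le hα0 (h u))
          rw [Set.indicator_apply]
          have hiff : u ∈ S j ↔ (2:ℝ≥0∞) ^ ((j:ℤ):ℝ) < h u := by
            simp [hSdef, mem_setOf_eq, (mem_Ioi.mp hu)]
          rw [if_congr hiff rfl rfl]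
      _ = C * K * ∫⁻ t in Ioi (0:ℝ), h t ^ α * v t := by
          have hrw : ∀ u, (K * h u ^ α) * v u = K * (h u ^ α * v u) := fun u => mul_assoc _ _ _
          simp_rw [hrw]
          rw [lintegral_const_mul (f := fun t => h t ^ α * v t) K ((hmeas.pow_const α).mul hv), ← mul_assoc]
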